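/- Parallel XOR reduction correctness: for vectors S : Fin M → Bool and the reduction pattern 'for k = 1, 2, 4, ... while k < M: for each i ≡ 0 mod 2k with i + k < M, set S[i] := S[i] XOR S[i+k]', the final value S[0] equals the XOR of all original entries S[0], ..., S[M-1]. -/

import Mathlib

/-- One round of pairwise reduction with stride `k` and combining operation `op`. -/
def redStep (op : Bool → Bool → Bool) (M k : ℕ) (t : ℕ → Bool) : ℕ → Bool :=
  fun i => if i % (2 * k) = 0 ∧ i + k < M then op (t i) (t (i + k)) else t i

/-- Run the rounds for k = 1, 2, 4, ... while k < M. -/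
def redRun (op : Bool → Bool → Bool) (M : ℕ) (t : ℕ → Bool) : ℕ → Bool :=
  (List.range M).foldl (fun t j => if 2 ^ j < M then redStep op M (2 ^ j) t else t) t

lemma foldr_xor_shift (c : Bool) (l : List Bool) :
    l.foldr xor c = xor (l.foldr xor false) c := by
  induction l with
  | nil => simp
  | cons a l ih => simp [ih, Bool.xor_assoc]

lemma redInv (M : ℕ) (S : ℕ → Bool) (n : ℕ) :
    ∀ i, i % 2 ^ n = 0 → i < M →
      (List.range n).foldl (fun t j => if 2 ^ j < M then redStep xor M (2 ^ j) t else t) S i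
        = ((List.range' i (min (2 ^ n) (M - i))).map S).foldr xor false := by
  induction n with
  | zero =>
    intro i _ hiM
    have h1 : min (2 ^ 0) (M - i) = 1 := by simp; omega
    rw [h1]
    simp
  | succ n ih =>
    intro i hi hiM
    have hpow : (0:ℕ) < 2 ^ n := Nat.pow_pos (by norm_num)
    have h2 : (2:ℕ) ^ (n + 1) = 2 * 2 ^ n := by ring
    have hin : i % 2 ^ n = 0 := by
      rw [← Nat.mod_mod_of_dvd i (pow_dvd_pow 2 (Nat.le_succ n)), hi, Nat.zero_mod]
    rw [List.range_succ, List.foldl_append]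
    simp only [List.foldl_cons, List.foldl_nil]
    by_cases hlt : 2 ^ n < M
    · simp only [if_pos hlt, redStep, ← h2, hi, true_and]
      by_cases hik : i + 2 ^ n < M
      · rw [if_pos hik]
        rw [ih i hin hiM,
          ih (i + 2 ^ n) (by simp [Nat.add_mod_right, hin]) hik]
        have hm1 : min (2 ^ n) (M - i) = 2 ^ n := by omega
        have hsplit : min (2 ^ (n + 1)) (M - i)
            = 2 ^ n + min (2 ^ n) (M - (i + 2 ^ n)) := by
          rw [h2]; omega
        rw [hm1, hsplit, ← List.range'_append_1, List.map_append, List.foldr_append]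
        conv_rhs => rw [foldr_xor_shift]
      · rw [if_neg hik, ih i hin hiM]
        have : min (2 ^ n) (M - i) = min (2 ^ (n + 1)) (M - i) := by rw [h2]; omega
        rw [this]
    · simp only [if_neg hlt]
      rw [ih i hin hiM]
      have : min (2 ^ n) (M - i) = min (2 ^ (n + 1)) (M - i) := by rw [h2]; omega
      rw [this]

theorem stmt15 (M : ℕ) (hM : 0 < M) (S : ℕ → Bool) :
    redRun xor M S 0 = ((List.range M).map S).foldr xor false := by
  have h := redInv M S M 0 (by simp) hM
  have hmin : min (2 ^ M) (M - 0) = M := by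
    have : M < 2 ^ M := Nat.lt_two_pow_self; omega
  rw [redRun, h, hmin, List.range_eq_range']
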